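/- For any ν ∈ int(T), ν_c ∈ C(ν), and r ∈ [R_ν]: ℋ((W^(ν'))_{ν'∈T∖{ν}}, PadR_r(W^(ν)_{r,:})) = σ^(ν,r)·Ĉ^(ν,r) and ℋ((W^(ν'))_{ν'∈T∖{ν_c}}, PadC_r(W^(ν_c)_{:,r})) = σ^(ν,r)·Ĉ^(ν,r), where PadR_r(Δᵀ) ∈ ℝ^{R_ν×R_{Pa(ν)}} denotes the matrix whose r'th row is Δᵀ and whose other rows are zero, and PadC_r(Δ) ∈ ℝ^{R_{ν_c}×R_ν} denotes the matrix whose r'th column is Δ and whose other columns are zero. -/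

import Mathlib

namespace HTF

/-- Rooted tree whose leaves are labeled by elements of `Fin N`. -/
inductive MTree (N : ℕ) : Type
  | leaf : Fin N → MTree N
  | node : List (MTree N) → MTree N

noncomputable instance {N : ℕ} : DecidableEq (MTree N) := fun _ _ => Classical.dec _

namespace MTree

variable {N : ℕ}

/-- The list of leaf labels of the tree. -/
def leafList : MTree N → List (Fin N)
  | .leaf i => [i]
  | .node ts => ts.attach.flatMap fun t => t.1.leafList
decreasing_by simp only [MTree.node.sizeOf_spec]; have := List.sizeOf_lt_of_mem t.2; omega

/-- The label of a node: set of leaf indices appearing in its subtree. -/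
def label (t : MTree N) : Finset (Fin N) := t.leafList.toFinset

/-- All nodes (subtrees) of the tree. -/
def nodes : MTree N → List (MTree N)
  | .leaf i => [.leaf i]
  | .node ts => .node ts :: ts.attach.flatMap fun t => t.1.nodes
decreasing_by simp only [MTree.node.sizeOf_spec]; have := List.sizeOf_lt_of_mem t.2; omega

/-- The children of a node. -/
def children : MTree N → List (MTree N)
  | .leaf _ => []
  | .node ts => ts

/-- Interior (non-leaf) node. -/
def IsInterior : MTree N → Prop
  | .leaf _ => False
  | .node _ => True

/-- Every non-leaf node has at least one child. -/
def Branching : MTree N → Prop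
  | .leaf _ => True
  | .node ts => ts ≠ [] ∧ ∀ t ∈ ts.attach, Branching t.1
decreasing_by simp only [MTree.node.sizeOf_spec]; have := List.sizeOf_lt_of_mem t.2; omega

/-- A valid mode tree over `[N]`: it has exactly `N` leaves, labeled `{1},...,{N}`
(each index appearing exactly once), and interior nodes have children. -/
def Valid (t : MTree N) : Prop :=
  t.leafList.Nodup ∧ (∀ i : Fin N, i ∈ t.leafList) ∧ t.Branching

/-- The parent of node `ν` in the tree (first argument), if it exists. -/
noncomputable def parentIn : MTree N → MTree N → Option (MTree N)
  | .leaf _, _ => none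
  | .node ts, ν =>
      if ν ∈ ts then some (.node ts)
      else ts.attach.findSome? fun t => parentIn t.1 ν
termination_by T _ => sizeOf T
decreasing_by simp only [MTree.node.sizeOf_spec]; have := List.sizeOf_lt_of_mem t.2; omega

end MTree

open MTree

variable {N : ℕ} (D : Fin N → ℕ)

/-- Full index set of an order-`N` tensor with mode dimensions `D`. -/
abbrev Idx : Type := ∀ n, Fin (D n)

/-- The intermediate tensors `W^(ν,r)` of a hierarchical tensor factorization with
local-component numbers `R` and weight matrices `W` (columns indexed by `ℕ`).
An order-`|label ν|` tensor is represented as a function of a full index tuple that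
only depends on the coordinates in `label ν`; with this representation, the tensor
product of tensors over disjoint mode sets is pointwise multiplication and the mode
permutation `π_ν` is the identity. -/
noncomputable def interm (R : MTree N → ℕ) (W : ∀ ν : MTree N, Fin (R ν) → ℕ → ℝ) :
    MTree N → ℕ → Idx D → ℝ
  | .leaf i, r => fun x =>
      if h : R (.leaf i) = D i then W (.leaf i) (Fin.cast h.symm (x i)) r else 0
  | .node ts, r => fun x =>
      ∑ r' : Fin (R (.node ts)),
        W (.node ts) r' r * (ts.attach.map fun t => interm R W t.1 (r' : ℕ) x).prod
decreasing_by simp only [MTree.node.sizeOf_spec]; have := List.sizeOf_lt_of_mem t.2; omega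

/-- The end tensor `W_H` of the hierarchical tensor factorization with mode tree `T`. -/
noncomputable def endT (R : MTree N → ℕ) (W : ∀ ν : MTree N, Fin (R ν) → ℕ → ℝ)
    (T : MTree N) : Idx D → ℝ :=
  interm D R W T 0

/-- Entry `(i, j)` of the weight matrix at node `ν` (zero outside the row range). -/
noncomputable def went (R : MTree N → ℕ) (W : ∀ ν : MTree N, Fin (R ν) → ℕ → ℝ)
    (ν : MTree N) (i j : ℕ) : ℝ :=
  if h : i < R ν then W ν ⟨i, h⟩ j else 0

/-- `R_{Pa(ν)}` : the number of local components at the parent of `ν` in `T`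
(`1` if `ν` is the root). -/
noncomputable def Rpar (R : MTree N → ℕ) (T ν : MTree N) : ℕ :=
  if ν = T then 1 else ((parentIn T ν).map R).getD 0

/-- Replace the weight matrix at node `μ` by `A`, keeping all other weight matrices. -/
noncomputable def replace (R : MTree N → ℕ) (W : ∀ ν : MTree N, Fin (R ν) → ℕ → ℝ)
    (μ : MTree N) (A : Fin (R μ) → ℕ → ℝ) : ∀ ν : MTree N, Fin (R ν) → ℕ → ℝ :=
  fun ν => if h : ν = μ then fun i j => A (Fin.cast (congrArg R h) i) j else W ν

/-- Frobenius (Euclidean) inner product of order-`N` tensors. -/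
noncomputable def tinner (A B : Idx D → ℝ) : ℝ := ∑ x, A x * B x

/-- Frobenius norm of an order-`N` tensor. -/
noncomputable def tnorm (A : Idx D → ℝ) : ℝ := Real.sqrt (∑ x, (A x) ^ 2)

/-- Frobenius norm of an order-`|s|` tensor represented as a function of a full index
tuple depending only on the coordinates in `s` (so that the sum over the full index
set over-counts each entry `∏_{n ∉ s} D n` times). -/
noncomputable def rnorm (s : Finset (Fin N)) (A : Idx D → ℝ) : ℝ :=
  Real.sqrt ((∑ x, (A x) ^ 2) / ∏ n ∈ sᶜ, (D n : ℝ))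

/-- Squared norm of the `r`'th column of the weight matrix at node `c`. -/
noncomputable def colSq (R : MTree N → ℕ) (W : ∀ ν : MTree N, Fin (R ν) → ℕ → ℝ)
    (c : MTree N) (r : ℕ) : ℝ :=
  ∑ i : Fin (R c), (W c i r) ^ 2

/-- Squared norm of the `r`'th row of the weight matrix at node `ν` of `T`. -/
noncomputable def rowSq (R : MTree N → ℕ) (W : ∀ ν : MTree N, Fin (R ν) → ℕ → ℝ)
    (T ν : MTree N) (r : ℕ) : ℝ :=
  ∑ j : Fin (Rpar R T ν), (went R W ν r (j : ℕ)) ^ 2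

/-- `σ^(ν,r)` : the norm of the `(ν,r)`'th local component, i.e. the product of the
norms of the vectors in `LC(ν,r)` (the `r`'th row of `W^(ν)` together with the `r`'th
columns of the weight matrices of the children of `ν`). -/
noncomputable def sigmaLoc (R : MTree N → ℕ) (W : ∀ ν : MTree N, Fin (R ν) → ℕ → ℝ)
    (T ν : MTree N) (r : ℕ) : ℝ :=
  Real.sqrt (rowSq R W T ν r) * (ν.children.map fun c => Real.sqrt (colSq R W c r)).prod

/-- `PadR_r(W^(ν)_{r,:})` : the matrix whose `r`'th row is the `r`'th row of `W^(ν)`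
and whose other rows are zero. -/
noncomputable def padRow (R : MTree N → ℕ) (W : ∀ ν : MTree N, Fin (R ν) → ℕ → ℝ)
    (ν : MTree N) (r : ℕ) : Fin (R ν) → ℕ → ℝ :=
  fun i j => if (i : ℕ) = r then W ν i j else 0

/-- `PadC_r(W^(c)_{:,r})` : the matrix whose `r`'th column is the `r`'th column of
`W^(c)` and whose other columns are zero. -/
noncomputable def padCol (R : MTree N → ℕ) (W : ∀ ν : MTree N, Fin (R ν) → ℕ → ℝ)
    (c : MTree N) (r : ℕ) : Fin (R c) → ℕ → ℝ :=
  fun i j => if j = r then W c i r else 0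

/-- `Ĉ^(ν,r)` : the end tensor obtained by normalizing the `r`'th local component at
`ν` and setting all other local components at `ν` to zero, i.e. the end tensor computed
with `W^(ν)` replaced by `σ^{-1} · PadR_r(W^(ν)_{r,:})` (and `0` if `σ^(ν,r) = 0`). -/
noncomputable def hatC (R : MTree N → ℕ) (W : ∀ ν : MTree N, Fin (R ν) → ℕ → ℝ)
    (T ν : MTree N) (r : ℕ) : Idx D → ℝ :=
  if sigmaLoc R W T ν r = 0 then 0
  else endT D R (replace R W ν fun i j =>
    if (i : ℕ) = r then (sigmaLoc R W T ν r)⁻¹ * W ν i j else 0) T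

/-- The objective `φ_H = L_H ∘ (end tensor)`. -/
noncomputable def obj (L : (Idx D → ℝ) → ℝ) (R : MTree N → ℕ) (T : MTree N)
    (W : ∀ ν : MTree N, Fin (R ν) → ℕ → ℝ) : ℝ :=
  L (endT D R W T)

/-- Update the single entry `(i, j)` of the weight matrix at node `μ` to the value `s`. -/
noncomputable def upd (R : MTree N → ℕ) (W : ∀ ν : MTree N, Fin (R ν) → ℕ → ℝ)
    (μ : MTree N) (i j : ℕ) (s : ℝ) : ∀ ν : MTree N, Fin (R ν) → ℕ → ℝ :=
  fun ν i' j' => if ν = μ ∧ (i' : ℕ) = i ∧ j' = j then s else W ν i' j'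

/-- `∂φ_H/∂W^(μ)_{i,j}` : the partial derivative of the objective with respect to the
`(i,j)` entry of the weight matrix at node `μ`, at the point `W`. -/
noncomputable def dObj (L : (Idx D → ℝ) → ℝ) (R : MTree N → ℕ) (T : MTree N)
    (W : ∀ ν : MTree N, Fin (R ν) → ℕ → ℝ) (μ : MTree N) (i j : ℕ) : ℝ :=
  deriv (fun s : ℝ => obj D L R T (upd R W μ i j s)) (went R W μ i j)

/-- `∇L(A)` : the gradient of a loss over tensors, entrywise. -/
noncomputable def tgrad (L : (Idx D → ℝ) → ℝ) (A : Idx D → ℝ) : Idx D → ℝ :=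
  fun x => deriv (fun s : ℝ => L (Function.update A x s)) (A x)

/-- Local smoothness of the loss: its gradient is Lipschitz on compact sets. -/
def LocSmooth (L : (Idx D → ℝ) → ℝ) : Prop :=
  ∀ K : Set (Idx D → ℝ), IsCompact K → ∃ β : NNReal, LipschitzOnWith β (tgrad D L) K

/-- Gradient flow over the objective: each entry of each weight matrix moves against
its partial derivative. -/
def GradFlow (L : (Idx D → ℝ) → ℝ) (R : MTree N → ℕ) (T : MTree N)
    (Wt : ℝ → ∀ ν : MTree N, Fin (R ν) → ℕ → ℝ) : Prop :=
  ∀ (ν : MTree N) (i : Fin (R ν)) (j : ℕ) (t : ℝ), 0 ≤ t →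
    HasDerivAt (fun s : ℝ => Wt s ν i j) (- dObj D L R T (Wt t) ν (i : ℕ) j) t

/-- The matricization of an order-`N` tensor according to the index set `I` : the
matrix whose rows are indexed by the modes in `I` and whose columns are indexed by the
remaining modes. -/
noncomputable def matricize (I : Finset (Fin N)) (A : Idx D → ℝ) :
    Matrix (∀ i : {n // n ∈ I}, Fin (D i)) (∀ j : {n // n ∉ I}, Fin (D j)) ℝ :=
  fun ρ κ => A fun n => if h : n ∈ I then ρ ⟨n, h⟩ else κ ⟨n, h⟩

/-- Frobenius norm of the weight matrix `W^(ν) ∈ ℝ^{R_ν × R_{Pa(ν)}}` at node `ν` of `T`. -/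
noncomputable def wFro (R : MTree N → ℕ) (W : ∀ ν : MTree N, Fin (R ν) → ℕ → ℝ)
    (T ν : MTree N) : ℝ :=
  Real.sqrt (∑ i : Fin (R ν), ∑ j : Fin (Rpar R T ν), (W ν i (j : ℕ)) ^ 2)

/-- The weights obtained by pruning the `(ν,r)`'th local component: the `r`'th row of
`W^(ν)` and the `r`'th column of `W^(c)` for every child `c` of `ν` are set to zero. -/
noncomputable def pruneLC (R : MTree N → ℕ) (W : ∀ ν : MTree N, Fin (R ν) → ℕ → ℝ)
    (ν : MTree N) (r : ℕ) : ∀ μ : MTree N, Fin (R μ) → ℕ → ℝ :=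
  fun μ i j =>
    if μ = ν ∧ (i : ℕ) = r then 0
    else if μ ∈ ν.children ∧ j = r then 0
    else W μ i j

section Aux
open MTree
variable {N : ℕ}

lemma MTree.sizeOf_pos (t : MTree N) : 0 < sizeOf t := by cases t <;> simp

lemma sizeOf_lt_of_mem_list {t : MTree N} {ts : List (MTree N)} (h : t ∈ ts) :
    sizeOf t < sizeOf (MTree.node ts) := by
  have := List.sizeOf_lt_of_mem h; simp only [MTree.node.sizeOf_spec]; omega

lemma mem_nodes_node {ts : List (MTree N)} {a : MTree N} :
    a ∈ (MTree.node ts).nodes ↔ a = MTree.node ts ∨ ∃ t ∈ ts, a ∈ t.nodes := by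
  rw [nodes]; simp

lemma mem_leafList_node {ts : List (MTree N)} {ℓ : Fin N} :
    ℓ ∈ (MTree.node ts).leafList ↔ ∃ t ∈ ts, ℓ ∈ t.leafList := by
  rw [leafList]; simp

lemma leafList_node_eq (ts : List (MTree N)) :
    (MTree.node ts).leafList = ts.flatMap leafList := by
  rw [leafList]; simp

lemma branching_node {ts : List (MTree N)} :
    Branching (MTree.node ts) ↔ ts ≠ [] ∧ ∀ t ∈ ts, Branching t := by
  rw [Branching]; simp

lemma self_mem_nodes (t : MTree N) : t ∈ t.nodes := by
  cases t with
  | leaf i => rw [nodes]; simp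
  | node ts => rw [mem_nodes_node]; left; rfl

lemma sizeOf_le_of_mem_nodes : ∀ {t a : MTree N}, a ∈ t.nodes → sizeOf a ≤ sizeOf t := by
  intro t
  induction t using MTree.nodes.induct with
  | case1 i => intro a ha; rw [nodes] at ha; simp at ha; subst ha; rfl
  | case2 ts ih =>
    intro a ha
    rcases mem_nodes_node.1 ha with h | ⟨t, ht, h⟩
    · subst h; rfl
    · have h1 : sizeOf a ≤ sizeOf t := ih ⟨t, ht⟩ h
      have := sizeOf_lt_of_mem_list ht
      omega

lemma mem_nodes_trans : ∀ {t a b : MTree N}, a ∈ b.nodes → b ∈ t.nodes → a ∈ t.nodes := by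
  intro t
  induction t using MTree.nodes.induct with
  | case1 i =>
    intro a b hab hb; rw [nodes] at hb; simp at hb; subst hb
    rw [nodes] at hab; simp at hab; subst hab; exact self_mem_nodes _
  | case2 ts ih =>
    intro a b hab hb
    rcases mem_nodes_node.1 hb with h | ⟨t, ht, h⟩
    · subst h
      rcases mem_nodes_node.1 hab with h' | ⟨t, ht, h'⟩
      · subst h'; exact self_mem_nodes _
      · exact mem_nodes_node.2 (Or.inr ⟨t, ht, h'⟩)
    · exact mem_nodes_node.2 (Or.inr ⟨t, ht, ih ⟨t, ht⟩ hab h⟩)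

lemma children_mem_nodes {t c : MTree N} (h : c ∈ t.children) : c ∈ t.nodes := by
  cases t with
  | leaf i => simp [children] at h
  | node ts => exact mem_nodes_node.2 (Or.inr ⟨c, h, self_mem_nodes c⟩)

lemma sizeOf_lt_of_children {t c : MTree N} (h : c ∈ t.children) : sizeOf c < sizeOf t := by
  cases t with
  | leaf i => simp [children] at h
  | node ts => exact sizeOf_lt_of_mem_list h

lemma branching_of_mem_nodes : ∀ {t a : MTree N}, Branching t → a ∈ t.nodes → Branching a := by
  intro t
  induction t using MTree.nodes.induct with
  | case1 i => intro a _ ha; rw [nodes] at ha; simp at ha; subst ha; trivial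
  | case2 ts ih =>
    intro a hB ha
    rcases mem_nodes_node.1 ha with h | ⟨t, ht, h⟩
    · subst h; exact hB
    · exact ih ⟨t, ht⟩ ((branching_node.1 hB).2 t ht) h

lemma leafList_ne_nil : ∀ {t : MTree N}, Branching t → t.leafList ≠ [] := by
  intro t
  induction t using MTree.nodes.induct with
  | case1 i => intro _; rw [leafList]; simp
  | case2 ts ih =>
    intro hB
    obtain ⟨hne, hall⟩ := branching_node.1 hB
    obtain ⟨t, ht⟩ := List.exists_mem_of_ne_nil _ hne
    have := ih ⟨t, ht⟩ (hall t ht)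
    obtain ⟨ℓ, hℓ⟩ := List.exists_mem_of_ne_nil _ this
    exact List.ne_nil_of_mem (mem_leafList_node.2 ⟨t, ht, hℓ⟩)

lemma mem_leafList_of_mem_nodes : ∀ {t a : MTree N} {ℓ : Fin N},
    a ∈ t.nodes → ℓ ∈ a.leafList → ℓ ∈ t.leafList := by
  intro t
  induction t using MTree.nodes.induct with
  | case1 i => intro a ℓ ha h; rw [nodes] at ha; simp at ha; subst ha; exact h
  | case2 ts ih =>
    intro a ℓ ha h
    rcases mem_nodes_node.1 ha with h' | ⟨t, ht, h'⟩
    · subst h'; exact h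
    · exact mem_leafList_node.2 ⟨t, ht, ih ⟨t, ht⟩ h' h⟩

end Aux
section Aux2
open MTree
variable {N : ℕ}

lemma flat_disj {α β : Type*} (f : α → List β) : ∀ l : List α, (l.flatMap f).Nodup →
    ∀ a ∈ l, ∀ b ∈ l, a ≠ b → ∀ x ∈ f a, x ∉ f b := by
  intro l
  induction l with
  | nil => simp
  | cons c l ih =>
    intro hnd a ha b hb hab x hx hxb
    rw [List.flatMap_cons, List.nodup_append] at hnd
    obtain ⟨h1, h2, h3⟩ := hnd
    rcases List.mem_cons.1 ha with ha' | ha' <;> rcases List.mem_cons.1 hb with hb' | hb'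
    · exact hab (ha'.trans hb'.symm)
    · exact h3 x (ha' ▸ hx) x (List.mem_flatMap.2 ⟨b, hb', hxb⟩) rfl
    · exact h3 x (hb' ▸ hxb) x (List.mem_flatMap.2 ⟨a, ha', hx⟩) rfl
    · exact ih h2 a ha' b hb' hab x hx hxb

lemma flat_nodup_list {α β : Type*} (f : α → List β) : ∀ l : List α, (l.flatMap f).Nodup →
    (∀ a ∈ l, f a ≠ []) → l.Nodup := by
  intro l
  induction l with
  | nil => simp
  | cons c l ih =>
    intro hnd hne
    rw [List.flatMap_cons, List.nodup_append] at hnd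
    obtain ⟨h1, h2, h3⟩ := hnd
    rw [List.nodup_cons]
    constructor
    · intro hc
      obtain ⟨x, hx⟩ := List.exists_mem_of_ne_nil _ (hne c (List.mem_cons_self))
      exact h3 x hx x (List.mem_flatMap.2 ⟨c, hc, hx⟩) rfl
    · exact ih h2 fun a ha => hne a (List.mem_cons_of_mem _ ha)

lemma flat_nodup_mem {α β : Type*} (f : α → List β) : ∀ l : List α, (l.flatMap f).Nodup →
    ∀ a ∈ l, (f a).Nodup := by
  intro l
  induction l with
  | nil => simp
  | cons c l ih =>
    intro hnd a ha
    rw [List.flatMap_cons, List.nodup_append] at hnd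
    rcases List.mem_cons.1 ha with rfl | ha
    · exact hnd.1
    · exact ih hnd.2.1 a ha

lemma disj_children {ts : List (MTree N)} (hnd : (MTree.node ts).leafList.Nodup) :
    ∀ t₁ ∈ ts, ∀ t₂ ∈ ts, t₁ ≠ t₂ → ∀ ℓ ∈ t₁.leafList, ℓ ∉ t₂.leafList := by
  rw [leafList_node_eq] at hnd
  exact flat_disj _ ts hnd

lemma nodup_ts {ts : List (MTree N)} (hB : Branching (MTree.node ts))
    (hnd : (MTree.node ts).leafList.Nodup) : ts.Nodup := by
  rw [leafList_node_eq] at hnd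
  exact flat_nodup_list _ ts hnd fun t ht => leafList_ne_nil ((branching_node.1 hB).2 t ht)

lemma nodup_leafList_of_mem_nodes : ∀ {t a : MTree N},
    t.leafList.Nodup → a ∈ t.nodes → a.leafList.Nodup := by
  intro t
  induction t using MTree.nodes.induct with
  | case1 i => intro a hnd ha; rw [nodes] at ha; simp at ha; subst ha; exact hnd
  | case2 ts ih =>
    intro a hnd ha
    rcases mem_nodes_node.1 ha with rfl | ⟨t, ht, h⟩
    · exact hnd
    · refine ih ⟨t, ht⟩ ?_ h
      rw [leafList_node_eq] at hnd
      exact flat_nodup_mem _ ts hnd t ht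

lemma unique_child {ts : List (MTree N)} (hB : Branching (MTree.node ts))
    (hnd : (MTree.node ts).leafList.Nodup) {a t₁ t₂ : MTree N} (h1 : t₁ ∈ ts) (h2 : t₂ ∈ ts)
    (ha1 : a ∈ t₁.nodes) (ha2 : a ∈ t₂.nodes) : t₁ = t₂ := by
  by_contra hne
  have hBa : Branching a := branching_of_mem_nodes ((branching_node.1 hB).2 t₁ h1) ha1
  obtain ⟨ℓ, hℓ⟩ := List.exists_mem_of_ne_nil _ (leafList_ne_nil hBa)
  exact disj_children hnd t₁ h1 t₂ h2 hne ℓ (mem_leafList_of_mem_nodes ha1 hℓ)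
    (mem_leafList_of_mem_nodes ha2 hℓ)

end Aux2
section Aux3
open MTree
variable {N : ℕ} {D : Fin N → ℕ}

lemma prod_factor {α : Type*} (a : ℝ) : ∀ (l : List α), l.Nodup → ∀ t₀ ∈ l, ∀ f g : α → ℝ,
    f t₀ = a * g t₀ → (∀ t ∈ l, t ≠ t₀ → f t = g t) → (l.map f).prod = a * (l.map g).prod := by
  intro l
  induction l with
  | nil => simp
  | cons c l ih =>
    intro hnd t₀ ht₀ f g hf hoth
    rcases List.mem_cons.1 ht₀ with h | h
    · subst h
      have : ∀ t ∈ l, f t = g t := fun t ht =>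
        hoth t (List.mem_cons_of_mem _ ht) (fun he => (List.nodup_cons.1 hnd).1 (he ▸ ht))
      simp only [List.map_cons, List.prod_cons, hf]
      rw [List.map_congr_left this]; ring
    · have hc : f c = g c := hoth c (List.mem_cons_self)
        (fun he => (List.nodup_cons.1 hnd).1 (he ▸ h))
      simp only [List.map_cons, List.prod_cons, hc]
      rw [ih (List.nodup_cons.1 hnd).2 t₀ h f g hf
        (fun t ht hne => hoth t (List.mem_cons_of_mem _ ht) hne)]
      ring

lemma interm_congr (R : MTree N → ℕ) (W₁ W₂ : ∀ ν : MTree N, Fin (R ν) → ℕ → ℝ) :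
    ∀ (μ : MTree N), (∀ μ' ∈ μ.nodes, ∀ i j, W₁ μ' i j = W₂ μ' i j) →
    ∀ j x, interm D R W₁ μ j x = interm D R W₂ μ j x := by
  intro μ
  induction μ using MTree.nodes.induct with
  | case1 i =>
    intro h j x
    rw [interm, interm]
    have := h (.leaf i) (self_mem_nodes _)
    split <;> simp [this]
  | case2 ts ih =>
    intro h j x
    rw [interm, interm]
    refine Finset.sum_congr rfl fun r' _ => ?_
    rw [h (.node ts) (self_mem_nodes _)]
    refine congrArg (fun z => _ * z) (congrArg List.prod (List.map_congr_left fun t ht => ?_))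
    exact ih t (fun μ' hμ' => h μ' (mem_nodes_trans hμ' (mem_nodes_node.2 (Or.inr ⟨t.1, t.2, self_mem_nodes _⟩)))) r' x

lemma replace_apply_of_ne {R : MTree N → ℕ} {W : ∀ ν : MTree N, Fin (R ν) → ℕ → ℝ}
    {μ ν : MTree N} {A : Fin (R μ) → ℕ → ℝ} (h : ν ≠ μ) : replace R W μ A ν = W ν :=
  dif_neg h

lemma replace_apply_self {R : MTree N → ℕ} {W : ∀ ν : MTree N, Fin (R ν) → ℕ → ℝ}
    {μ : MTree N} {A : Fin (R μ) → ℕ → ℝ} : ∀ i j, replace R W μ A μ i j = A i j := by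
  intro i j
  rw [replace, dif_pos rfl]
  exact congrArg (fun z => A z j) (Fin.ext rfl)

lemma interm_replace_of_not_mem {R : MTree N → ℕ} {W : ∀ ν : MTree N, Fin (R ν) → ℕ → ℝ}
    {μ ν : MTree N} {A : Fin (R ν) → ℕ → ℝ} (h : ν ∉ μ.nodes) (j : ℕ) (x : Idx D) :
    interm D R (replace R W ν A) μ j x = interm D R W μ j x := by
  refine interm_congr R _ W μ (fun μ' hμ' i j => ?_) j x
  rw [replace_apply_of_ne (fun he => h (by rw [← he]; exact hμ'))]

lemma not_mem_nodes_of_mem_list {ts : List (MTree N)} {t : MTree N} (ht : t ∈ ts) :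
    MTree.node ts ∉ t.nodes := fun h => by
  have h1 := sizeOf_le_of_mem_nodes h
  have h2 := sizeOf_lt_of_mem_list ht
  omega

lemma interm_replaceRoot (R : MTree N → ℕ) (W : ∀ ν : MTree N, Fin (R ν) → ℕ → ℝ)
    (ts : List (MTree N)) (A : Fin (R (MTree.node ts)) → ℕ → ℝ) (j : ℕ) (x : Idx D) :
    interm D R (replace R W (.node ts) A) (.node ts) j x =
      ∑ r' : Fin (R (.node ts)),
        A r' j * (ts.attach.map fun t => interm D R W t.1 (r' : ℕ) x).prod := by
  rw [interm]
  refine Finset.sum_congr rfl fun r' _ => ?_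
  rw [replace_apply_self]
  refine congrArg (fun z => _ * z) (congrArg List.prod (List.map_congr_left fun t _ => ?_))
  exact interm_replace_of_not_mem (not_mem_nodes_of_mem_list t.2) _ x

lemma interm_padCol (R : MTree N → ℕ) (W : ∀ ν : MTree N, Fin (R ν) → ℕ → ℝ)
    (c : MTree N) (r j : ℕ) (x : Idx D) :
    interm D R (replace R W c (padCol R W c r)) c j x =
      if j = r then interm D R W c j x else 0 := by
  cases c with
  | leaf i =>
    rw [interm, interm]
    beta_reduce
    split
    · rw [replace_apply_self]
      simp only [padCol]
      split <;> rename_i h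
      · rw [h]
      · rfl
    · simp
  | node ts =>
    rw [interm_replaceRoot, interm]
    by_cases hj : j = r
    · subst hj
      simp [padCol]
    · simp [padCol, hj]

lemma interm_col_zero (R : MTree N → ℕ) (W : ∀ ν : MTree N, Fin (R ν) → ℕ → ℝ)
    (c : MTree N) (r : ℕ) (h : ∀ i : Fin (R c), W c i r = 0) (x : Idx D) :
    interm D R W c r x = 0 := by
  cases c with
  | leaf i =>
    rw [interm]
    split <;> simp [h]
  | node ts =>
    rw [interm]
    simp [h]

end Aux3
section Aux4
open MTree
variable {N : ℕ}

lemma findSome_none {α β : Type*} (f : α → Option β) : ∀ l : List α,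
    (∀ x ∈ l, f x = none) → l.findSome? f = none := by
  intro l
  induction l with
  | nil => simp
  | cons c l ih =>
    intro h
    rw [List.findSome?_cons, h c (List.mem_cons_self)]
    exact ih fun x hx => h x (List.mem_cons_of_mem _ hx)

lemma findSome_some {α β : Type*} (f : α → Option β) (b : β) : ∀ l : List α,
    (∀ x ∈ l, f x = none ∨ f x = some b) → (∃ x ∈ l, f x = some b) →
    l.findSome? f = some b := by
  intro l
  induction l with
  | nil => simp
  | cons c l ih =>
    intro hall ⟨x, hx, hfx⟩
    rw [List.findSome?_cons]
    rcases hall c (List.mem_cons_self) with hc | hc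
    · rw [hc]
      rcases List.mem_cons.1 hx with h | h
      · exact absurd (h ▸ hfx) (by rw [hc]; simp)
      · exact ih (fun y hy => hall y (List.mem_cons_of_mem _ hy)) ⟨x, h, hfx⟩
    · rw [hc]

lemma mem_nodes_of_mem_list {ts : List (MTree N)} {t : MTree N} (ht : t ∈ ts) :
    t ∈ (MTree.node ts).nodes := mem_nodes_node.2 (Or.inr ⟨t, ht, self_mem_nodes t⟩)

lemma parentIn_none {ν : MTree N} : ∀ {t : MTree N}, ν ∉ t.nodes → parentIn t ν = none := by
  intro t
  induction t using MTree.nodes.induct with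
  | case1 i => intro _; rw [parentIn]
  | case2 ts ih =>
    intro h
    rw [parentIn]
    rw [if_neg (fun hmem => h (mem_nodes_of_mem_list hmem))]
    refine findSome_none _ _ fun t ht => ih t ?_
    exact fun hν => h (mem_nodes_trans hν (mem_nodes_of_mem_list t.2))

lemma parentIn_eq : ∀ {Tf : MTree N}, Branching Tf → Tf.leafList.Nodup →
    ∀ {p ν : MTree N}, p ∈ Tf.nodes → ν ∈ p.children → parentIn Tf ν = some p := by
  intro Tf
  induction Tf using MTree.nodes.induct with
  | case1 i =>
    intro _ _ p ν hp hν
    rw [nodes] at hp; simp at hp; subst hp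
    simp [children] at hν
  | case2 ts ih =>
    intro hB hnd p ν hp hν
    have hνp : ν ∈ p.nodes := children_mem_nodes hν
    have hsz : sizeOf ν < sizeOf p := sizeOf_lt_of_children hν
    rcases mem_nodes_node.1 hp with rfl | ⟨t₀, ht₀, hpt₀⟩
    · rw [parentIn, if_pos (show ν ∈ ts from hν)]
    · have hνt₀ : ν ∈ t₀.nodes := mem_nodes_trans hνp hpt₀
      have hνts : ν ∉ ts := by
        intro hmem
        rcases eq_or_ne ν t₀ with rfl | hne
        · have := sizeOf_le_of_mem_nodes hpt₀; omega
        · exact hne (unique_child hB hnd hmem ht₀ (self_mem_nodes ν) hνt₀)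
      rw [parentIn, if_neg hνts]
      refine findSome_some _ p _ (fun t _ => ?_) ⟨⟨t₀, ht₀⟩, List.mem_attach _ _, ?_⟩
      · by_cases hm : ν ∈ t.1.nodes
        · right
          have : t.1 = t₀ := unique_child hB hnd t.2 ht₀ hm hνt₀
          exact ih t ((branching_node.1 hB).2 t.1 t.2)
            (nodup_leafList_of_mem_nodes hnd (mem_nodes_of_mem_list t.2))
            (by rw [this]; exact hpt₀) hν
        · exact Or.inl (parentIn_none hm)
      · exact ih ⟨t₀, ht₀⟩ ((branching_node.1 hB).2 t₀ ht₀)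
          (nodup_leafList_of_mem_nodes hnd (mem_nodes_of_mem_list ht₀)) hpt₀ hν

lemma Rpar_eq {Tf p ν : MTree N} (R : MTree N → ℕ) (hB : Branching Tf)
    (hnd : Tf.leafList.Nodup) (hp : p ∈ Tf.nodes) (hν : ν ∈ p.children) :
    Rpar R Tf ν = R p := by
  have hne : ν ≠ Tf := by
    intro rfl'
    subst rfl'
    have h1 := sizeOf_le_of_mem_nodes hp
    have h2 := sizeOf_lt_of_children hν
    omega
  rw [Rpar, if_neg hne, parentIn_eq hB hnd hp hν]
  rfl

end Aux4
section Aux5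
open MTree
variable {N : ℕ}

lemma master (D : Fin N → ℕ) (R : MTree N → ℕ) (W₁ W₂ : ∀ ν : MTree N, Fin (R ν) → ℕ → ℝ)
    (ν : MTree N) (a : ℝ) (OK : ℕ → Prop) (Tf : MTree N)
    (hB : Branching Tf) (hnd : Tf.leafList.Nodup)
    (Hsub : ∀ μ', (∀ i j, W₁ μ' i j = W₂ μ' i j) ∨ μ' ∈ ν.nodes)
    (Hν : ∀ j (x : Idx D), OK j → interm D R W₁ ν j x = a * interm D R W₂ ν j x)
    (Hok : ∀ p, p ∈ Tf.nodes → ν ∈ p.children → ∀ j, j < R p → OK j) :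
    ∀ μ, μ ∈ Tf.nodes → ν ∈ μ.nodes → ∀ j x, (μ = ν → OK j) →
      interm D R W₁ μ j x = a * interm D R W₂ μ j x := by
  suffices h : ∀ n, ∀ μ, sizeOf μ ≤ n → μ ∈ Tf.nodes → ν ∈ μ.nodes → ∀ j x, (μ = ν → OK j) →
      interm D R W₁ μ j x = a * interm D R W₂ μ j x from fun μ => h (sizeOf μ) μ le_rfl
  intro n
  induction n with
  | zero => intro μ h; have := MTree.sizeOf_pos μ; omega
  | succ n ih =>
    intro μ hs hμTf hνμ j x hOK
    by_cases hμν : μ = ν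
    · subst hμν; exact Hν j x (hOK rfl)
    · cases μ with
      | leaf i =>
        rw [nodes] at hνμ; simp at hνμ
        exact absurd hνμ.symm hμν
      | node ts =>
        rcases mem_nodes_node.1 hνμ with h | ⟨t₀, ht₀, hνt₀⟩
        · exact absurd h.symm hμν
        have hBμ : Branching (MTree.node ts) := branching_of_mem_nodes hB hμTf
        have hndμ : (MTree.node ts).leafList.Nodup := nodup_leafList_of_mem_nodes hnd hμTf
        have hWμ : ∀ i j, W₁ (.node ts) i j = W₂ (.node ts) i j := by
          rcases Hsub (.node ts) with h | h
          · exact h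
          · exfalso
            have h1 := sizeOf_le_of_mem_nodes h
            have h2 := sizeOf_le_of_mem_nodes hνt₀
            have h3 := sizeOf_lt_of_mem_list ht₀
            omega
        rw [interm, interm, Finset.mul_sum]
        refine Finset.sum_congr rfl fun r' _ => ?_
        rw [hWμ]
        have hpf : (ts.attach.map fun t => interm D R W₁ t.1 (r' : ℕ) x).prod =
            a * (ts.attach.map fun t => interm D R W₂ t.1 (r' : ℕ) x).prod := by
          refine prod_factor a ts.attach (List.nodup_attach.2 (nodup_ts hBμ hndμ)) ⟨t₀, ht₀⟩
            (List.mem_attach _ _) _ _ ?_ ?_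
          · refine ih t₀ ?_ (mem_nodes_trans (mem_nodes_of_mem_list ht₀) hμTf) hνt₀ (r' : ℕ) x ?_
            · have h4 := sizeOf_lt_of_mem_list ht₀
              simp only [MTree.node.sizeOf_spec] at hs h4
              omega
            · intro ht₀ν
              exact Hok (.node ts) hμTf (show ν ∈ ts from ht₀ν ▸ ht₀) (r' : ℕ) r'.isLt
          · intro t ht hne
            have htν : t.1 ≠ t₀ := fun he => hne (Subtype.ext he)
            refine interm_congr R W₁ W₂ t.1 (fun μ' hμ' i j => ?_) (r' : ℕ) x
            rcases Hsub μ' with h | h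
            · exact h i j
            · exact absurd (unique_child hBμ hndμ t.2 ht₀ hμ' (mem_nodes_trans h hνt₀)) htν
        rw [hpf]; ring

end Aux5
end HTF
open HTF HTF.MTree in
/-- for an interior node `ν`, a child `c` of `ν`, and `r ∈ [R_ν]`, the
end tensor obtained by substituting `PadR_r(W^(ν)_{r,:})` for `W^(ν)` equals
`σ^(ν,r) · Ĉ^(ν,r)`, and the end tensor obtained by substituting `PadC_r(W^(c)_{:,r})`
for `W^(c)` also equals `σ^(ν,r) · Ĉ^(ν,r)`. -/
theorem statement7 {N : ℕ} (D : Fin N → ℕ) (T : MTree N) (hT : T.Valid)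
    (R : MTree N → ℕ) (hR : ∀ i : Fin N, R (MTree.leaf i) = D i)
    (W : ∀ ν : MTree N, Fin (R ν) → ℕ → ℝ)
    (ν : MTree N) (hν : ν ∈ T.nodes) (hint : ν.IsInterior)
    (c : MTree N) (hc : c ∈ ν.children) (r : Fin (R ν)) :
    (endT D R (replace R W ν (padRow R W ν (r : ℕ))) T
      = fun x => sigmaLoc R W T ν (r : ℕ) * hatC D R W T ν (r : ℕ) x) ∧
    (endT D R (replace R W c (padCol R W c (r : ℕ))) T
      = fun x => sigmaLoc R W T ν (r : ℕ) * hatC D R W T ν (r : ℕ) x) := by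
  obtain ⟨hndT, -, hBT⟩ := hT
  cases ν with
  | leaf i => exact hint.elim
  | node tsν =>
    have hc' : c ∈ tsν := hc
    have hBν : Branching (MTree.node tsν) := branching_of_mem_nodes hBT hν
    have hndν : (MTree.node tsν).leafList.Nodup := nodup_leafList_of_mem_nodes hndT hν
    have hcν : MTree.node tsν ≠ c := by
      intro he
      have h1 := sizeOf_lt_of_mem_list hc'
      rw [he] at h1
      exact lt_irrefl _ h1
    have hcnotmem : ∀ t ∈ tsν, t ≠ c → c ∉ t.nodes := fun t ht htc hmem =>
      htc (unique_child hBν hndν ht hc' hmem (self_mem_nodes c))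
    -- row-padded intermediate tensor at ν
    have hRowEq : ∀ (j : ℕ) (x : Idx D),
        interm D R (replace R W (.node tsν) (padRow R W (.node tsν) (r : ℕ))) (.node tsν) j x
        = ∑ r' : Fin (R (.node tsν)), (if (r' : ℕ) = (r : ℕ) then W (.node tsν) r' j else 0) *
            (tsν.attach.map fun t => interm D R W t.1 (r' : ℕ) x).prod := by
      intro j x
      rw [interm_replaceRoot]
      refine Finset.sum_congr rfl fun r' _ => ?_
      simp only [padRow]
    -- column-padded intermediate tensor at ν
    have hColEq : ∀ (j : ℕ) (x : Idx D),
        interm D R (replace R W c (padCol R W c (r : ℕ))) (.node tsν) j x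
        = ∑ r' : Fin (R (.node tsν)), W (.node tsν) r' j *
            (if (r' : ℕ) = (r : ℕ) then
              (tsν.attach.map fun t => interm D R W t.1 (r' : ℕ) x).prod else 0) := by
      intro j x
      rw [interm]
      refine Finset.sum_congr rfl fun r' _ => ?_
      rw [replace_apply_of_ne hcν]
      congr 1
      by_cases hr' : (r' : ℕ) = (r : ℕ)
      · rw [if_pos hr']
        refine congrArg List.prod (List.map_congr_left fun t ht => ?_)
        by_cases htc : t.1 = c
        · rw [htc, interm_padCol, if_pos hr']
        · exact interm_replace_of_not_mem (hcnotmem t.1 t.2 htc) _ x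
      · rw [if_neg hr']
        refine List.prod_eq_zero (List.mem_map.2 ⟨⟨c, hc'⟩, List.mem_attach _ _, ?_⟩)
        rw [interm_padCol, if_neg hr']
    have hpart1 : endT D R (replace R W (.node tsν) (padRow R W (.node tsν) (r : ℕ))) T
        = fun x => sigmaLoc R W T (.node tsν) (r : ℕ) * hatC D R W T (.node tsν) (r : ℕ) x := by
      by_cases hσ : sigmaLoc R W T (.node tsν) (r : ℕ) = 0
      · -- zero local component: end tensor vanishes
        have hz : ∀ x, interm D R (replace R W (.node tsν) (padRow R W (.node tsν) (r : ℕ)))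
            T 0 x = 0 := by
          rw [sigmaLoc] at hσ
          rcases mul_eq_zero.1 hσ with h | h
          · -- row of W^(ν) vanishes
            have h0 : rowSq R W T (.node tsν) (r : ℕ) = 0 :=
              (Real.sqrt_eq_zero (Finset.sum_nonneg fun _ _ => sq_nonneg _)).1 h
            have hrow : ∀ j, j < Rpar R T (.node tsν) → W (.node tsν) r j = 0 := by
              intro j hj
              have h1 := (Finset.sum_eq_zero_iff_of_nonneg
                (fun _ _ => sq_nonneg _)).1 h0 ⟨j, hj⟩ (Finset.mem_univ _)
              have h2 := sq_eq_zero_iff.1 h1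
              rw [went, dif_pos r.isLt] at h2
              have h3 : (⟨(r : ℕ), r.isLt⟩ : Fin (R (.node tsν))) = r := Fin.ext rfl
              rw [h3] at h2
              exact h2
            intro x
            refine (master D R _ _ (.node tsν) 0 (fun j => j < Rpar R T (.node tsν)) T hBT hndT
              (fun _ => Or.inl fun _ _ => rfl) ?_ ?_ T (self_mem_nodes T) hν 0 x ?_).trans
              (zero_mul _)
            · intro j y hOKj
              rw [zero_mul, hRowEq]
              refine Finset.sum_eq_zero fun r' _ => ?_
              by_cases h' : (r' : ℕ) = (r : ℕ)
              · rw [if_pos h']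
                have hr' : r' = r := Fin.ext h'
                rw [hr', hrow j hOKj, zero_mul]
              · rw [if_neg h', zero_mul]
            · intro p hp hνp j hj
              rw [Rpar_eq R hBT hndT hp hνp]
              exact hj
            · intro he
              rw [Rpar, if_pos he.symm]
              exact Nat.one_pos
          · -- a column of a child vanishes
            rcases List.mem_map.1 (List.prod_eq_zero_iff.1 h) with ⟨c', hc'', hsq⟩
            have hcol : ∀ i : Fin (R c'), W c' i (r : ℕ) = 0 := by
              have h0 : colSq R W c' (r : ℕ) = 0 :=
                (Real.sqrt_eq_zero (Finset.sum_nonneg fun _ _ => sq_nonneg _)).1 hsq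
              intro i
              exact sq_eq_zero_iff.1 ((Finset.sum_eq_zero_iff_of_nonneg
                (fun _ _ => sq_nonneg _)).1 h0 i (Finset.mem_univ _))
            intro x
            refine (master D R _ _ (.node tsν) 0 (fun _ => True) T hBT hndT
              (fun _ => Or.inl fun _ _ => rfl) ?_ (fun _ _ _ _ _ => trivial) T
              (self_mem_nodes T) hν 0 x (fun _ => trivial)).trans (zero_mul _)
            intro j y _
            rw [zero_mul, hRowEq]
            refine Finset.sum_eq_zero fun r' _ => ?_
            by_cases h' : (r' : ℕ) = (r : ℕ)
            · rw [if_pos h']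
              refine mul_eq_zero_of_right _
                (List.prod_eq_zero (List.mem_map.2 ⟨⟨c', hc''⟩, List.mem_attach _ _, ?_⟩))
              rw [h']
              exact interm_col_zero R W c' (r : ℕ) hcol y
            · rw [if_neg h', zero_mul]
        funext x
        rw [hσ, zero_mul]
        exact hz x
      · -- nonzero local component: pull out the scalar
        funext x
        rw [hatC, if_neg hσ]
        refine master D R _ _ (.node tsν) (sigmaLoc R W T (.node tsν) (r : ℕ)) (fun _ => True)
          T hBT hndT ?_ ?_ (fun _ _ _ _ _ => trivial) T (self_mem_nodes T) hν 0 x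
          (fun _ => trivial)
        · intro μ'
          by_cases h1 : μ' = MTree.node tsν
          · exact Or.inr (h1 ▸ self_mem_nodes _)
          · exact Or.inl fun i j => by rw [replace_apply_of_ne h1, replace_apply_of_ne h1]
        · intro j y _
          rw [hRowEq, interm_replaceRoot, Finset.mul_sum]
          refine Finset.sum_congr rfl fun r' _ => ?_
          beta_reduce
          by_cases h' : (r' : ℕ) = (r : ℕ)
          · rw [if_pos h', if_pos h']
            rw [show sigmaLoc R W T (.node tsν) (r : ℕ) *
              ((sigmaLoc R W T (.node tsν) (r : ℕ))⁻¹ * W (.node tsν) r' j *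
                (tsν.attach.map fun t => interm D R W t.1 (r' : ℕ) y).prod)
              = (sigmaLoc R W T (.node tsν) (r : ℕ) * (sigmaLoc R W T (.node tsν) (r : ℕ))⁻¹) *
                (W (.node tsν) r' j *
                  (tsν.attach.map fun t => interm D R W t.1 (r' : ℕ) y).prod) from by ring,
              mul_inv_cancel₀ hσ, one_mul]
          · simp [h']
    refine ⟨hpart1, ?_⟩
    have key2 : ∀ x, interm D R (replace R W c (padCol R W c (r : ℕ))) T 0 x
        = interm D R (replace R W (.node tsν) (padRow R W (.node tsν) (r : ℕ))) T 0 x := by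
      intro x
      refine (master D R _ _ (.node tsν) 1 (fun _ => True) T hBT hndT ?_ ?_
        (fun _ _ _ _ _ => trivial) T (self_mem_nodes T) hν 0 x (fun _ => trivial)).trans
        (one_mul _)
      · intro μ'
        by_cases h1 : μ' = MTree.node tsν
        · exact Or.inr (h1 ▸ self_mem_nodes _)
        · by_cases h2 : μ' = c
          · exact Or.inr (h2 ▸ children_mem_nodes hc)
          · exact Or.inl fun i j => by rw [replace_apply_of_ne h2, replace_apply_of_ne h1]
      · intro j y _
        rw [one_mul, hColEq, hRowEq]
        refine Finset.sum_congr rfl fun r' _ => ?_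
        by_cases h' : (r' : ℕ) = (r : ℕ)
        · rw [if_pos h', if_pos h']
        · rw [if_neg h', if_neg h', zero_mul, mul_zero]
    funext x
    exact (key2 x).trans (congrFun hpart1 x)
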